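/- For any set S, the functor S ↦ ℤ_nil[S] from sets to square groups is left adjoint to the functor assigning to a square group M its set of linear elements 𝕃(M) = {x ∈ M_e : H(x) = 0}. That is, square group morphisms ℤ_nil[S] → M correspond naturally to maps of sets S → 𝕃(M). -/

import Mathlib

/-- Cross-effect of a map `H` into an abelian group: `(x|y)_H = H(x+y) - H x - H y`. -/
def crossEff {Me : Type*} [AddGroup Me] {Mee : Type*} [AddCommGroup Mee]
    (H : Me → Mee) (x y : Me) : Mee :=
  H (x + y) - H x - H y

/-- The axioms of a square group `M_e --H--> M_ee --P--> M_e`: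
`M_ee` abelian, `P` a homomorphism, `H` quadratic (bilinear cross-effect), and
`(Pa|y)_H = 0 = (x|Pb)_H`, `P (x|y)_H = -x-y+x+y`, `PHP = 2P`. -/
structure IsSquareGroup {Me : Type*} [AddGroup Me] {Mee : Type*} [AddCommGroup Mee]
    (P : Mee →+ Me) (H : Me → Mee) : Prop where
  cross_add_left : ∀ x x' y : Me, crossEff H (x + x') y = crossEff H x y + crossEff H x' y
  cross_add_right : ∀ x y y' : Me, crossEff H x (y + y') = crossEff H x y + crossEff H x y'
  cross_P_left : ∀ (a : Mee) (y : Me), crossEff H (P a) y = 0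
  cross_P_right : ∀ (x : Me) (b : Mee), crossEff H x (P b) = 0
  P_cross : ∀ x y : Me, P (crossEff H x y) = -x - y + x + y
  PHP : ∀ a : Mee, P (H (P a)) = P a + P a

open scoped TensorProduct
open scoped commutatorElement

/-- Morphism of square groups. -/
def IsSGMorphism {Me : Type*} [AddGroup Me] {Mee : Type*} [AddCommGroup Mee]
    {Ne : Type*} [AddGroup Ne] {Nee : Type*} [AddCommGroup Nee]
    (P : Mee →+ Me) (H : Me → Mee) (P' : Nee →+ Ne) (H' : Ne → Nee)
    (fe : Me → Ne) (fee : Mee → Nee) : Prop :=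
  (∀ x y : Me, fe (x + y) = fe x + fe y) ∧
  (∀ a b : Mee, fee (a + b) = fee a + fee b) ∧
  (∀ a : Mee, fe (P a) = P' (fee a)) ∧
  (∀ x : Me, fee (H x) = H' (fe x))

/-- The free nilpotent group of class two on `S`, written additively. -/
abbrev FreeNil2Add (S : Type*) : Type _ :=
  Additive (FreeGroup S ⧸ (⊤ : Subgroup (FreeGroup S)).lowerCentralSeries 2)

/-- The generator of the free nil₂-group corresponding to `s ∈ S`. -/
def nil2Gen {S : Type*} (s : S) : FreeNil2Add S :=
  Additive.ofMul (QuotientGroup.mk (FreeGroup.of s))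

namespace ZnilAux

theorem addhom_zero {G G' : Type*} [AddGroup G] [AddGroup G'] {f : G → G'}
    (hf : ∀ a b, f (a + b) = f a + f b) : f 0 = 0 := by
  have := hf 0 0
  rw [add_zero] at this
  exact (left_eq_add.mp this)

theorem addhom_neg {G G' : Type*} [AddGroup G] [AddGroup G'] {f : G → G'}
    (hf : ∀ a b, f (a + b) = f a + f b) (a : G) : f (-a) = -f a := by
  have := hf a (-a)
  rw [add_neg_cancel, addhom_zero hf] at this
  exact (neg_eq_of_add_eq_zero_right this.symm).symm

theorem addhom_sub {G G' : Type*} [AddGroup G] [AddGroup G'] {f : G → G'}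
    (hf : ∀ a b, f (a + b) = f a + f b) (a b : G) : f (a - b) = f a - f b := by
  rw [sub_eq_add_neg, hf, addhom_neg hf, sub_eq_add_neg]

section SG

variable {Me : Type*} [AddGroup Me] {Mee : Type*} [AddCommGroup Mee]
  {P : Mee →+ Me} {H : Me → Mee}

theorem H_zero (hsq : IsSquareGroup P H) : H (0 : Me) = 0 := by
  have h := hsq.cross_add_left 0 0 0
  simp [crossEff] at h
  exact h

theorem cross_zero_left (hsq : IsSquareGroup P H) (y : Me) : crossEff H 0 y = 0 := by
  simp [crossEff, H_zero hsq]

theorem cross_zero_right (hsq : IsSquareGroup P H) (x : Me) : crossEff H x 0 = 0 := by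
  simp [crossEff, H_zero hsq]

theorem cross_neg_left (hsq : IsSquareGroup P H) (x y : Me) :
    crossEff H (-x) y = -crossEff H x y := by
  have h := hsq.cross_add_left x (-x) y
  rw [add_neg_cancel, cross_zero_left hsq] at h
  linear_combination (norm := abel) -h

theorem cross_neg_right (hsq : IsSquareGroup P H) (x y : Me) :
    crossEff H x (-y) = -crossEff H x y := by
  have h := hsq.cross_add_right x y (-y)
  rw [add_neg_cancel, cross_zero_right hsq] at h
  linear_combination (norm := abel) -h

theorem neg_H (hsq : IsSquareGroup P H) (x : Me) :
    H (-x) = -H x - crossEff H x (-x) := by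
  have : crossEff H x (-x) = -H x - H (-x) := by
    simp [crossEff, H_zero hsq]
  rw [this]; abel

theorem add_H (hsq : IsSquareGroup P H) (x y : Me) :
    H (x + y) = crossEff H x y + H x + H y := by
  show H (x + y) = (H (x + y) - H x - H y) + H x + H y
  abel

theorem P_central (hsq : IsSquareGroup P H) (a : Mee) (z : Me) : P a + z = z + P a := by
  have h := hsq.P_cross (P a) z
  rw [hsq.cross_P_left, map_zero] at h
  have h2 : z + P a + (-P a - z + P a + z) = z + P a + 0 := by rw [← h]
  simpa [sub_eq_add_neg, add_assoc] using h2

theorem comm_eq (hsq : IsSquareGroup P H) (a b : Me) :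
    a + b - a - b = -a - b + a + b := by
  have hc : ∀ z : Me, (-a - b + a + b) + z = z + (-a - b + a + b) := by
    intro z
    have := P_central hsq (crossEff H a b) z
    rwa [hsq.P_cross] at this
  have h1 := hc (a + b)
  simp only [sub_eq_add_neg, ← add_assoc] at h1 ⊢
  exact (add_right_cancel (add_right_cancel h1)).symm

theorem lcs2_bot (hsq : IsSquareGroup P H) :
    (⊤ : Subgroup (Multiplicative Me)).lowerCentralSeries 2 = ⊥ := by
  have hcen : (⊤ : Subgroup (Multiplicative Me)).lowerCentralSeries 1 ≤ Subgroup.centralizer Set.univ := by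
    rw [Subgroup.top_lowerCentralSeries_one, commutator_def, Subgroup.commutator_le]
    intro a _ b _
    rw [Subgroup.mem_centralizer_iff]
    intro m _
    have e1 : Multiplicative.toAdd a + Multiplicative.toAdd b + -Multiplicative.toAdd a
        + -Multiplicative.toAdd b
        = P (crossEff H (Multiplicative.toAdd a) (Multiplicative.toAdd b)) := by
      rw [hsq.P_cross]
      simpa [sub_eq_add_neg] using comm_eq hsq (Multiplicative.toAdd a) (Multiplicative.toAdd b)
    have habm : Multiplicative.toAdd (m * ⁅a, b⁆) = Multiplicative.toAdd (⁅a, b⁆ * m) := by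
      simp only [commutatorElement_def, toAdd_mul, toAdd_inv]
      rw [e1]
      exact (P_central hsq _ _).symm
    exact Multiplicative.toAdd.injective habm
  rw [eq_bot_iff]
  show ⁅(⊤ : Subgroup (Multiplicative Me)).lowerCentralSeries 1, ⊤⁆ ≤ ⊥
  rw [Subgroup.commutator_le]
  intro g hg z _
  rw [Subgroup.mem_bot, commutatorElement_eq_one_iff_commute]
  exact (Subgroup.mem_centralizer_iff.mp (hcen hg) z (Set.mem_univ z)).symm

end SG

theorem freeNil2_induction {S : Type*} (p : FreeNil2Add S → Prop) (h0 : p 0)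
    (hadd : ∀ x y, p x → p y → p (x + y)) (hneg : ∀ x, p x → p (-x))
    (hgen : ∀ s, p (nil2Gen s)) : ∀ x, p x := by
  have key : ∀ w : FreeGroup S, p (Additive.ofMul (QuotientGroup.mk w)) := by
    intro w
    induction w using FreeGroup.induction_on with
    | C1 => exact h0
    | of s => exact hgen s
    | inv_of s hs => exact hneg _ hs
    | mul x y hx hy => exact hadd _ _ hx hy
  intro x
  obtain ⟨w, hw⟩ := QuotientGroup.mk_surjective (Additive.toMul x)
  have : Additive.ofMul (QuotientGroup.mk w) = x := by rw [hw]; rfl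
  rw [← this]; exact key w

theorem tensor_induction {S : Type*} (p : ((S →₀ ℤ) ⊗[ℤ] (S →₀ ℤ)) → Prop) (h0 : p 0)
    (hadd : ∀ x y, p x → p y → p (x + y)) (hneg : ∀ x, p x → p (-x))
    (hgen : ∀ u v : S, p (Finsupp.single u 1 ⊗ₜ[ℤ] Finsupp.single v 1)) : ∀ x, p x := by
  set A : AddSubgroup ((S →₀ ℤ) ⊗[ℤ] (S →₀ ℤ)) := AddSubgroup.closure
    {z | ∃ u v : S, z = Finsupp.single u 1 ⊗ₜ[ℤ] Finsupp.single v 1} with hA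
  have hmem : ∀ x, x ∈ A := by
    intro x
    induction x using TensorProduct.induction_on with
    | zero => exact zero_mem A
    | add x y hx hy => exact add_mem hx hy
    | tmul f g =>
      induction f using Finsupp.induction_linear with
      | zero => simpa using zero_mem A
      | add f f' hf hf' => rw [TensorProduct.add_tmul]; exact add_mem hf hf'
      | single u n =>
        induction g using Finsupp.induction_linear with
        | zero => simpa using zero_mem A
        | add g g' hg hg' => rw [TensorProduct.tmul_add]; exact add_mem hg hg'
        | single v m =>
          have e : (Finsupp.single u n) ⊗ₜ[ℤ] (Finsupp.single v m)
              = (n * m) • (Finsupp.single u (1:ℤ) ⊗ₜ[ℤ] Finsupp.single v (1:ℤ)) := by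
            rw [show Finsupp.single u n = n • Finsupp.single u (1:ℤ) by simp,
              show Finsupp.single v m = m • Finsupp.single v (1:ℤ) by simp,
              TensorProduct.smul_tmul_smul]
          rw [e, ← Int.cast_smul_eq_zsmul ℤ]
          push_cast
          exact AddSubgroup.zsmul_mem A (AddSubgroup.subset_closure ⟨u, v, rfl⟩) _
  intro x
  refine AddSubgroup.closure_induction ?_ h0 (fun a b _ _ ha hb => hadd a b ha hb)
    (fun a _ ha => hneg a ha) (hmem x)
  rintro z ⟨u, v, rfl⟩
  exact hgen u v

end ZnilAux
open ZnilAux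

/-- `ℤ_nil[-]` is left adjoint to the linear-elements functor `𝕃`:  given the square
group `ℤ_nil[S]` (with e-level `⟨S⟩ⁿⁱˡ`, ee-level `ℤ[S] ⊗ ℤ[S]`, `P(s⊗t) = [t,s]`,
`H(s) = 0` and `(s|t)_H = t⊗s`), for any square group `M` the morphisms of square groups
`ℤ_nil[S] → M` correspond bijectively to maps of sets `S → 𝕃(M) = {x : H(x) = 0}`. -/
theorem znil_leftAdjoint_linearElements (S : Type*)
    (PZ : ((S →₀ ℤ) ⊗[ℤ] (S →₀ ℤ)) →+ FreeNil2Add S)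
    (HZ : FreeNil2Add S → (S →₀ ℤ) ⊗[ℤ] (S →₀ ℤ))
    (hZsq : IsSquareGroup PZ HZ)
    (hPZ : ∀ s t : S, PZ (Finsupp.single s 1 ⊗ₜ[ℤ] Finsupp.single t 1) =
      Additive.ofMul ⁅(QuotientGroup.mk (FreeGroup.of t) :
          FreeGroup S ⧸ (⊤ : Subgroup (FreeGroup S)).lowerCentralSeries 2),
        QuotientGroup.mk (FreeGroup.of s)⁆)
    (hHZ : ∀ s : S, HZ (nil2Gen s) = 0)
    (hcrZ : ∀ s t : S, crossEff HZ (nil2Gen s) (nil2Gen t) =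
      Finsupp.single t 1 ⊗ₜ[ℤ] Finsupp.single s 1)
    {Me : Type*} [AddGroup Me] {Mee : Type*} [AddCommGroup Mee]
    (P : Mee →+ Me) (H : Me → Mee) (hsq : IsSquareGroup P H) :
    (∀ (fe : FreeNil2Add S → Me) (fee : ((S →₀ ℤ) ⊗[ℤ] (S →₀ ℤ)) → Mee),
      IsSGMorphism PZ HZ P H fe fee → ∀ s : S, H (fe (nil2Gen s)) = 0) ∧
    (∀ f₀ : S → Me, (∀ s : S, H (f₀ s) = 0) →
      ∃! q : (FreeNil2Add S → Me) × (((S →₀ ℤ) ⊗[ℤ] (S →₀ ℤ)) → Mee),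
        IsSGMorphism PZ HZ P H q.1 q.2 ∧ ∀ s : S, q.1 (nil2Gen s) = f₀ s) := by
  constructor
  · rintro fe fee ⟨h1, h2, h3, h4⟩ s
    rw [← h4, hHZ, addhom_zero h2]
  · intro f₀ hf₀
    -- the e-level map
    set N := (⊤ : Subgroup (FreeGroup S)).lowerCentralSeries 2 with hN
    set g : FreeGroup S →* Multiplicative Me :=
      FreeGroup.lift (fun s => Multiplicative.ofAdd (f₀ s)) with hg
    have hker : ∀ x ∈ N, g x = 1 := by
      intro x hx
      have h1 : g x ∈ (⊤ : Subgroup (Multiplicative Me)).lowerCentralSeries 2 :=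
        Subgroup.lowerCentralSeries.map g 2 ⟨x, hx, rfl⟩
      rwa [lcs2_bot hsq, Subgroup.mem_bot] at h1
    set ge : (FreeGroup S ⧸ N) →* Multiplicative Me := QuotientGroup.lift N g (fun x hx => MonoidHom.mem_ker.mpr (hker x hx)) with hge
    set fe : FreeNil2Add S → Me :=
      fun x => Multiplicative.toAdd (ge (Additive.toMul x)) with hfe
    have hfe_add : ∀ x y, fe (x + y) = fe x + fe y := by
      intro x y
      show Multiplicative.toAdd (ge (Additive.toMul x * Additive.toMul y)) = _
      rw [map_mul]; rfl
    have hfe_zero : fe 0 = 0 := addhom_zero hfe_add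
    have hfe_neg : ∀ x, fe (-x) = -fe x := addhom_neg hfe_add
    have hfe_gen : ∀ s, fe (nil2Gen s) = f₀ s := by
      intro s
      show Multiplicative.toAdd (ge (QuotientGroup.mk (FreeGroup.of s))) = f₀ s
      rw [hge, QuotientGroup.lift_mk', hg, FreeGroup.lift_apply_of]
      rfl
    -- the ee-level map
    set B : (S →₀ ℤ) →ₗ[ℤ] (S →₀ ℤ) →ₗ[ℤ] Mee :=
      Finsupp.lift ((S →₀ ℤ) →ₗ[ℤ] Mee) ℤ S
        (fun u => Finsupp.lift Mee ℤ S (fun v => crossEff H (f₀ v) (f₀ u))) with hB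
    set feeL : ((S →₀ ℤ) ⊗[ℤ] (S →₀ ℤ)) →ₗ[ℤ] Mee := TensorProduct.lift B with hfeeL
    set fee : ((S →₀ ℤ) ⊗[ℤ] (S →₀ ℤ)) → Mee := fun a => feeL a with hfee
    have hfee_add : ∀ a b, fee (a + b) = fee a + fee b := fun a b => map_add feeL a b
    have hfee_zero : fee 0 = 0 := map_zero feeL
    have hfee_neg : ∀ a, fee (-a) = -fee a := fun a => map_neg feeL a
    have hfee_gen : ∀ u v : S, fee (Finsupp.single u 1 ⊗ₜ[ℤ] Finsupp.single v 1)
        = crossEff H (f₀ v) (f₀ u) := by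
      intro u v
      show TensorProduct.lift B (Finsupp.single u 1 ⊗ₜ[ℤ] Finsupp.single v 1) = _
      rw [TensorProduct.lift.tmul, hB]
      simp [Finsupp.lift_apply, Finsupp.sum_single_index]
    -- compatibility with P
    have hPZfe : ∀ a, fe (PZ a) = P (fee a) := by
      refine tensor_induction _ ?_ ?_ ?_ ?_
      · rw [map_zero, hfe_zero, hfee_zero, map_zero]
      · intro a b ha hb
        rw [map_add, hfe_add, ha, hb, hfee_add, map_add]
      · intro a ha
        rw [map_neg, hfe_neg, ha, hfee_neg, map_neg]
      · intro u v
        rw [hPZ u v, hfee_gen u v, hsq.P_cross]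
        have hv : fe (nil2Gen v) = f₀ v := hfe_gen v
        have hu : fe (nil2Gen u) = f₀ u := hfe_gen u
        have hcm : fe (Additive.ofMul
            ⁅(QuotientGroup.mk (FreeGroup.of v) : FreeGroup S ⧸ N),
              QuotientGroup.mk (FreeGroup.of u)⁆)
            = f₀ v + f₀ u + -f₀ v + -f₀ u := by
          show Multiplicative.toAdd (ge ⁅(QuotientGroup.mk (FreeGroup.of v) : FreeGroup S ⧸ N),
            QuotientGroup.mk (FreeGroup.of u)⁆) = _
          rw [map_commutatorElement]
          simp only [commutatorElement_def, toAdd_mul, toAdd_inv]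
          rw [show Multiplicative.toAdd (ge (QuotientGroup.mk (FreeGroup.of v))) = f₀ v from hv,
            show Multiplicative.toAdd (ge (QuotientGroup.mk (FreeGroup.of u))) = f₀ u from hu]
        rw [hcm]
        have := comm_eq hsq (f₀ v) (f₀ u)
        simpa [sub_eq_add_neg] using this
    -- compatibility of cross effects
    have hfee_cross : ∀ x y, fee (crossEff HZ x y) = crossEff H (fe x) (fe y) := by
      refine freeNil2_induction
        (fun x => ∀ y, fee (crossEff HZ x y) = crossEff H (fe x) (fe y)) ?_ ?_ ?_ ?_
      · intro y
        rw [cross_zero_left hZsq, hfee_zero, hfe_zero, cross_zero_left hsq]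
      · intro x x' hx hx' y
        rw [hZsq.cross_add_left, hfee_add, hx y, hx' y, hfe_add, hsq.cross_add_left]
      · intro x hx y
        rw [cross_neg_left hZsq, hfee_neg, hx y, hfe_neg, cross_neg_left hsq]
      · intro s
        refine freeNil2_induction
          (fun y => fee (crossEff HZ (nil2Gen s) y) = crossEff H (fe (nil2Gen s)) (fe y))
          ?_ ?_ ?_ ?_
        · show fee (crossEff HZ (nil2Gen s) 0) = crossEff H (fe (nil2Gen s)) (fe 0)
          rw [cross_zero_right hZsq, hfee_zero, hfe_zero, cross_zero_right hsq]
        · intro y y' hy hy'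
          rw [hZsq.cross_add_right, hfee_add, hy, hy', hfe_add, hsq.cross_add_right]
        · intro y hy
          rw [cross_neg_right hZsq, hfee_neg, hy, hfe_neg, cross_neg_right hsq]
        · intro t
          show fee (crossEff HZ (nil2Gen s) (nil2Gen t))
            = crossEff H (fe (nil2Gen s)) (fe (nil2Gen t))
          rw [hcrZ s t, hfee_gen t s, hfe_gen s, hfe_gen t]
    -- compatibility with H
    have hfeeH : ∀ x, fee (HZ x) = H (fe x) := by
      refine freeNil2_induction _ ?_ ?_ ?_ ?_
      · show fee (HZ 0) = H (fe 0)
        rw [H_zero hZsq, hfee_zero, hfe_zero, H_zero hsq]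
      · intro x y hx hy
        rw [add_H hZsq, hfee_add, hfee_add, hfee_cross, hx, hy, hfe_add,
          add_H hsq (fe x) (fe y)]
      · intro x hx
        rw [neg_H hZsq, addhom_sub hfee_add, hfee_neg, hx, hfee_cross, hfe_neg,
          neg_H hsq (fe x)]
      · intro s
        show fee (HZ (nil2Gen s)) = H (fe (nil2Gen s))
        rw [hHZ s, hfee_zero, hfe_gen s, hf₀ s]
    refine ⟨(fe, fee), ⟨⟨hfe_add, hfee_add, hPZfe, hfeeH⟩, hfe_gen⟩, ?_⟩
    rintro ⟨ge', gee'⟩ ⟨⟨hg1, hg2, hg3, hg4⟩, hggen⟩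
    dsimp only at hggen hg1 hg2 hg3 hg4
    have hgeq : ∀ x, ge' x = fe x := by
      refine freeNil2_induction _ ?_ ?_ ?_ ?_
      · show ge' 0 = fe 0
        rw [addhom_zero hg1, hfe_zero]
      · intro x y hx hy
        rw [hg1, hfe_add, hx, hy]
      · intro x hx
        rw [addhom_neg hg1, hfe_neg, hx]
      · intro s
        show ge' (nil2Gen s) = fe (nil2Gen s)
        rw [hggen s, hfe_gen s]
    have hgee_cross : ∀ x y, gee' (crossEff HZ x y) = crossEff H (ge' x) (ge' y) := by
      intro x y
      show gee' (HZ (x + y) - HZ x - HZ y) = H (ge' x + ge' y) - H (ge' x) - H (ge' y)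
      rw [addhom_sub hg2, addhom_sub hg2, hg4, hg4, hg4, hg1]
    have hgeeq : ∀ a, gee' a = fee a := by
      refine tensor_induction _ ?_ ?_ ?_ ?_
      · show gee' 0 = fee 0
        rw [addhom_zero hg2, hfee_zero]
      · intro a b ha hb
        rw [hg2, hfee_add, ha, hb]
      · intro a ha
        rw [addhom_neg hg2, hfee_neg, ha]
      · intro u v
        rw [← hcrZ v u, hgee_cross, hgeq, hgeq, hfe_gen, hfe_gen, hcrZ v u, hfee_gen u v]
    exact Prod.ext (funext hgeq) (funext hgeeq)
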